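/- Let q be an odd prime power and n a positive integer with (q,n) even. Let χ be a nontrivial multiplicative character of F_{q^n} and b ∈ F_{q^n}^*. Set X_b(χ) = Σ_{ξ ∈ F_{q^n}^*} χ(ξ) ψ(b ξ²), G = Σ_{ξ ∈ F_{q^n}^*} χ₂(ξ) ψ(ξ), and C(χ) = Σ_{ξ ∈ F_{q^n}} χ(ξ) χ₂(ξ² − 1). Then |X_b(χ)|² = (1 + χ(−1)) q^n + χ₂(b)·G·C(χ), and moreover |C(χ)| ≤ 2 q^{n/2}. -/

import Mathlib

/-- The canonical additive character of a finite field `K` of characteristic `p`: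
`ψ(x) = exp(2πi · Tr₀(x)/p)` where `Tr₀` is the absolute trace down to the prime field. -/
noncomputable def canonAddChar (p : ℕ) (K : Type*) [Field K] [Fintype K] [CharP K p]
    [Algebra (ZMod p) K] (x : K) : ℂ :=
  Complex.exp (2 * Real.pi * Complex.I * ((Algebra.trace (ZMod p) K x).val : ℂ) / (p : ℂ))

set_option linter.unusedSectionVars false

namespace Aux18

variable (p : ℕ) [Fact p.Prime] (E : Type*) [Field E] [Fintype E] [DecidableEq E] [CharP E p]
    [Algebra (ZMod p) E]

/-- The canonical additive character as an `AddChar`. -/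
noncomputable def psi : AddChar E ℂ :=
  haveI : NeZero p := ⟨(Fact.out : p.Prime).ne_zero⟩
  (ZMod.stdAddChar (N := p)).compAddMonoidHom (Algebra.trace (ZMod p) E).toAddMonoidHom

lemma psi_apply (x : E) : psi p E x = canonAddChar p E x := by
  haveI : NeZero p := ⟨(Fact.out : p.Prime).ne_zero⟩
  simp only [psi, AddChar.compAddMonoidHom_apply, LinearMap.toAddMonoidHom_coe,
    ZMod.stdAddChar_apply, ZMod.toCircle_apply, canonAddChar]

lemma psi_prim : (psi p E).IsPrimitive := by
  haveI : NeZero p := ⟨(Fact.out : p.Prime).ne_zero⟩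
  refine AddChar.IsPrimitive.of_ne_one ?_
  intro h
  have h2 : Algebra.trace (ZMod p) E ≠ 0 := Algebra.trace_ne_zero (ZMod p) E
  refine h2 (LinearMap.ext fun x => ?_)
  have hx : psi p E x = 1 := by rw [h]; rfl
  have : ZMod.stdAddChar (Algebra.trace (ZMod p) E x) = ZMod.stdAddChar (0 : ZMod p) := by
    simpa [psi, AddChar.compAddMonoidHom_apply] using hx
  simpa using ZMod.injective_stdAddChar this

lemma psi_norm (x : E) : ‖psi p E x‖ = 1 := by
  haveI : NeZero p := ⟨(Fact.out : p.Prime).ne_zero⟩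
  simp only [psi, AddChar.compAddMonoidHom_apply, ZMod.stdAddChar_apply]
  exact Circle.norm_coe _

lemma psi_conj (x : E) : (starRingEnd ℂ) (psi p E x) = psi p E (-x) := by
  have h1 : psi p E x * psi p E (-x) = 1 := by
    rw [← AddChar.map_add_eq_mul, add_neg_cancel, AddChar.map_zero_eq_one]
  have h2 : (psi p E x)⁻¹ = (starRingEnd ℂ) (psi p E x) :=
    Complex.inv_eq_conj (by rw [psi_norm])
  rw [← h2]
  exact (eq_inv_of_mul_eq_one_right h1).symm

/-- The complex-valued quadratic character. -/
noncomputable def chi2 : MulChar E ℂ := (quadraticChar E).ringHomComp (Int.castRingHom ℂ)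

lemma chi2_apply (x : E) : chi2 E x = ((quadraticChar E x : ℤ) : ℂ) := rfl

variable {E}

lemma ringChar_ne_two (hp : Odd p) : ringChar E ≠ 2 := by
  have h : p = ringChar E := CharP.eq E ‹CharP E p› (ringChar.charP E)
  rw [← h]
  intro h2
  rw [h2] at hp
  exact (Nat.not_odd_iff_even.mpr (by norm_num)) hp

variable {p}

lemma chi2_ne_one (hp : Odd p) : chi2 E ≠ 1 := by
  obtain ⟨x, hx⟩ := FiniteField.exists_nonsquare (F := E) (ringChar_ne_two p hp)
  have hx0 : x ≠ 0 := fun h => hx (h ▸ ⟨0, by simp⟩)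
  intro h
  have : chi2 E x = 1 := by rw [h, MulChar.one_apply hx0.isUnit]
  rw [chi2_apply, quadraticChar_neg_one_iff_not_isSquare.mpr hx] at this
  norm_num at this

lemma chi2_sq (hp : Odd p) {x : E} (hx : x ≠ 0) : chi2 E x * chi2 E x = 1 := by
  rw [chi2_apply, ← Int.cast_mul, ← sq, quadraticChar_sq_one hx, Int.cast_one]

lemma chi2_quadratic : (chi2 E).IsQuadratic :=
  (quadraticChar_isQuadratic E).comp _

lemma chi2_inv : (chi2 E)⁻¹ = chi2 E := chi2_quadratic.inv

/-- Sum over `E` splits as value at `0` plus sum over units. -/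
lemma sum_units_eq (f : E → ℂ) : ∑ x : E, f x = f 0 + ∑ u : Eˣ, f (u : E) := by
  classical
  have h1 : ∑ u : Eˣ, f (u : E) = ∑ s : {x : E // x ≠ 0}, f s.val :=
    Fintype.sum_equiv (unitsEquivNeZero (G₀ := E)) _ _ (fun u => rfl)
  have h2 : ∑ s : {x : E // x ≠ 0}, f s.val = ∑ x ∈ Finset.univ.filter (· ≠ 0), f x :=
    (Finset.sum_subtype _ (by simp) f).symm
  rw [h1, h2, Finset.filter_ne', ← Finset.add_sum_erase _ f (Finset.mem_univ 0)]

lemma sum_sq_eq (hp : Odd p) (f : E → ℂ) :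
    ∑ x : E, f (x ^ 2) = ∑ y : E, (1 + chi2 E y) * f y := by
  classical
  rw [← Finset.sum_fiberwise Finset.univ (fun x : E => x ^ 2) (fun x => f (x ^ 2))]
  refine Finset.sum_congr rfl fun y _ => ?_
  have h1 : ∑ x ∈ Finset.univ.filter (fun x : E => x ^ 2 = y), f (x ^ 2)
      = ∑ x ∈ Finset.univ.filter (fun x : E => x ^ 2 = y), f y := by
    refine Finset.sum_congr rfl fun x hx => ?_
    rw [(Finset.mem_filter.mp hx).2]
  rw [h1, Finset.sum_const, nsmul_eq_mul]
  congr 1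
  have hcard := quadraticChar_card_sqrts (ringChar_ne_two p hp) y
  have : ({x : E | x ^ 2 = y}.toFinset : Finset E) = Finset.univ.filter (fun x : E => x ^ 2 = y) := by
    ext x; simp
  rw [this] at hcard
  have : ((Finset.univ.filter (fun x : E => x ^ 2 = y)).card : ℂ)
      = (((quadraticChar E y : ℤ) + 1 : ℤ) : ℂ) := by exact_mod_cast congrArg (Int.cast : ℤ → ℂ) hcard
  rw [this, chi2_apply]
  push_cast
  ring

lemma sum_psi_mul_sq (hp : Odd p) {c : E} (hc : c ≠ 0) :
    ∑ x : E, psi p E (c * x ^ 2) = chi2 E c * gaussSum (chi2 E) (psi p E) := by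
  classical
  rw [sum_sq_eq hp (fun y => psi p E (c * y))]
  have hsplit : ∀ y : E, (1 + chi2 E y) * psi p E (c * y)
      = psi p E (c * y) + chi2 E y * psi p E (c * y) := fun y => by ring
  simp only [hsplit]
  rw [Finset.sum_add_distrib]
  have h0 : ∑ y : E, psi p E (c * y) = 0 := by
    have := AddChar.sum_mulShift (ψ := psi p E) c (psi_prim p E)
    rw [if_neg hc, Nat.cast_zero] at this
    rw [← this]
    exact Finset.sum_congr rfl fun y _ => by rw [mul_comm]
  rw [h0, zero_add]
  -- second sum is the shifted Gauss sum
  have hcu : IsUnit c := hc.isUnit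
  have hgs := gaussSum_mulShift (chi2 E) (psi p E) hcu.unit
  have h2 : ∑ y : E, chi2 E y * psi p E (c * y) = gaussSum (chi2 E) ((psi p E).mulShift c) := by
    refine Finset.sum_congr rfl fun y _ => ?_
    rw [AddChar.mulShift_apply]
  rw [h2]
  have hcv : (hcu.unit : E) = c := rfl
  rw [hcv] at hgs
  calc gaussSum (chi2 E) ((psi p E).mulShift c)
      = (chi2 E c * chi2 E c) * gaussSum (chi2 E) ((psi p E).mulShift c) := by
        rw [chi2_sq hp hc, one_mul]
    _ = chi2 E c * gaussSum (chi2 E) (psi p E) := by rw [mul_assoc, hgs]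

lemma gaussSum_conj (β : MulChar E ℂ) :
    (starRingEnd ℂ) (gaussSum β (psi p E)) = gaussSum β⁻¹ (psi p E)⁻¹ := by
  rw [gaussSum, map_sum]
  refine Finset.sum_congr rfl fun x _ => ?_
  rw [map_mul, psi_conj, AddChar.inv_apply]
  congr 1
  exact MulChar.star_apply' β x

lemma abs_gaussSum (hp : Odd p) {β : MulChar E ℂ} (hβ : β ≠ 1) :
    ‖gaussSum β (psi p E)‖ = Real.sqrt (Fintype.card E) := by
  have key := gaussSum_mul_gaussSum_eq_card hβ (psi_prim p E)
  rw [← gaussSum_conj, Complex.mul_conj] at key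
  have : Complex.normSq (gaussSum β (psi p E)) = (Fintype.card E : ℝ) := by exact_mod_cast key
  rw [Complex.norm_def, this]

lemma abs_jacobiSum_le (hp : Odd p) (α : MulChar E ℂ) :
    ‖jacobiSum α (chi2 E)‖ ≤ Real.sqrt (Fintype.card E) := by
  have hcard : (1 : ℝ) ≤ Fintype.card E := by
    exact_mod_cast Nat.one_le_iff_ne_zero.mpr Fintype.card_ne_zero
  have hsq1 : (1 : ℝ) ≤ Real.sqrt (Fintype.card E) := by
    rw [show (1:ℝ) = Real.sqrt 1 by simp]
    exact Real.sqrt_le_sqrt hcard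
  rcases eq_or_ne α 1 with rfl | hα
  · rw [jacobiSum_one_nontrivial (chi2_ne_one hp)]
    simpa using hsq1
  rcases eq_or_ne (α * chi2 E) 1 with hmul | hmul
  · have h2 : chi2 E = α⁻¹ := eq_inv_of_mul_eq_one_left (by rwa [mul_comm] at hmul)
    rw [h2, jacobiSum_nontrivial_inv hα]
    have : α (-1) * α (-1) = 1 := by
      rw [← map_mul]; simp
    rcases mul_self_eq_one_iff.mp this with h | h <;> rw [h] <;> simpa using hsq1
  · have key := jacobiSum_mul_nontrivial hmul (psi p E)
    have habs := congrArg (‖·‖) key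
    rw [norm_mul, norm_mul, abs_gaussSum hp hmul, abs_gaussSum hp hα,
      abs_gaussSum hp (chi2_ne_one hp)] at habs
    have hpos : Real.sqrt (Fintype.card E) ≠ 0 := by positivity
    rw [mul_left_cancel₀ hpos habs]


lemma exists_sqrt (hNe : Even (Fintype.card Eˣ)) {χ : MulChar E ℂ} (hχe : χ (-1) = 1) :
    ∃ lam : MulChar E ℂ, lam * lam = χ := by
  obtain ⟨g, hg⟩ := IsCyclic.exists_generator (α := Eˣ)
  set N := Fintype.card Eˣ with hN
  have hN0 : 0 < N := Fintype.card_pos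
  have h2N : 2 ∣ N := hNe.two_dvd
  have horder : orderOf g = N := by rw [orderOf_eq_card_of_forall_mem_zpowers hg, Nat.card_eq_fintype_card]
  have hghalf : g ^ (N / 2) = -1 := by
    have hy2 : (g ^ (N / 2)) * (g ^ (N / 2)) = 1 := by
      rw [← pow_add, show N / 2 + N / 2 = N by omega]
      exact pow_card_eq_one
    have hy1 : g ^ (N / 2) ≠ 1 := by
      intro h
      have hdvd := orderOf_dvd_of_pow_eq_one h
      rw [horder] at hdvd
      have := Nat.le_of_dvd (by omega) hdvd
      omega
    have hval : ((g ^ (N / 2) : Eˣ) : E) * ((g ^ (N / 2) : Eˣ) : E) = 1 := by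
      rw [← Units.val_mul, hy2, Units.val_one]
    rcases mul_self_eq_one_iff.mp hval with h | h
    · exact absurd (Units.val_eq_one.mp h) hy1
    · exact Units.ext (by rw [h]; simp)
  have hzeta : (χ (g : E)) ^ (N / 2) = 1 := by
    rw [← map_pow, ← Units.val_pow_eq_pow_val, hghalf]
    simpa using hχe
  obtain ⟨z, hz⟩ := IsAlgClosed.exists_pow_nat_eq (k := ℂ) (χ (g : E)) (n := 2) (by norm_num)
  have hchig : χ (g : E) ≠ 0 := by
    rw [← MulChar.coe_equivToUnitHom]
    exact Units.ne_zero _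
  have hz0 : z ≠ 0 := by
    intro h
    rw [h] at hz
    exact hchig (by simpa using hz.symm)
  have hzN : z ^ N = 1 := by
    conv_lhs => rw [show N = 2 * (N / 2) by omega, pow_mul, hz]
    exact hzeta
  have hmem : (Units.mk0 z hz0) ∈ rootsOfUnity N ℂ := by
    rw [mem_rootsOfUnity]
    exact Units.ext (by simpa using hzN)
  refine ⟨MulChar.ofRootOfUnity hmem hg, ?_⟩
  refine (MulChar.eq_iff hg _ χ).mpr ?_
  have hspec : MulChar.ofRootOfUnity hmem hg (g : E) = z := by
    rw [MulChar.ofRootOfUnity_spec hmem hg]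
    rfl
  calc (MulChar.ofRootOfUnity hmem hg * MulChar.ofRootOfUnity hmem hg) (g : E)
      = z * z := by rw [MulChar.coeToFun_mul, Pi.mul_apply, hspec]
    _ = χ (g : E) := by rw [← sq]; exact hz

lemma chi2_neg_one (hp : Odd p) (hE4 : Fintype.card E % 4 = 1) : chi2 E (-1) = 1 := by
  have h1 : IsSquare (-1 : E) := FiniteField.isSquare_neg_one_iff.mpr (by omega)
  have h2 : quadraticChar E (-1) = 1 :=
    (quadraticChar_one_iff_isSquare (neg_ne_zero.mpr one_ne_zero)).mpr h1
  rw [chi2_apply, h2, Int.cast_one]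

lemma abs_C_le (hp : Odd p) (hE4 : Fintype.card E % 4 = 1) {χ : MulChar E ℂ} (hχ : χ ≠ 1) :
    ‖∑ x : E, χ x * chi2 E (x ^ 2 - 1)‖ ≤ 2 * Real.sqrt (Fintype.card E) := by
  rcases eq_or_ne (χ (-1)) 1 with heven | hodd
  · -- χ even: factor through squares
    have hNe : Even (Fintype.card Eˣ) := by
      rw [Fintype.card_units]
      have h1 : Fintype.card E % 2 = 1 := by omega
      refine Nat.even_sub' ?_ |>.mpr (by simp [Nat.odd_iff, h1])
      exact Nat.one_le_iff_ne_zero.mpr Fintype.card_ne_zero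
    obtain ⟨lam, hlam⟩ := exists_sqrt hNe heven
    have hfac : ∀ x : E, χ x = lam (x ^ 2) := by
      intro x
      rw [← hlam, MulChar.coeToFun_mul, Pi.mul_apply, sq, map_mul]
    have hsum : ∑ x : E, χ x * chi2 E (x ^ 2 - 1)
        = ∑ x : E, lam (x ^ 2) * chi2 E (x ^ 2 - 1) :=
      Finset.sum_congr rfl fun x _ => by rw [hfac]
    have hsq := sum_sq_eq hp (fun y => lam y * chi2 E (y - 1))
    have hsplit : ∑ x : E, χ x * chi2 E (x ^ 2 - 1)
        = jacobiSum lam (chi2 E) + jacobiSum (lam * chi2 E) (chi2 E) := by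
      rw [hsum]
      rw [show (∑ x : E, lam (x ^ 2) * chi2 E (x ^ 2 - 1))
          = ∑ x : E, (fun y => lam y * chi2 E (y - 1)) (x ^ 2) from rfl, hsq]
      rw [jacobiSum, jacobiSum]
      rw [← Finset.sum_add_distrib]
      refine Finset.sum_congr rfl fun y _ => ?_
      have hneg : chi2 E (y - 1) = chi2 E (1 - y) := by
        rw [show y - 1 = -1 * (1 - y) by ring, map_mul, chi2_neg_one hp hE4, one_mul]
      rw [MulChar.coeToFun_mul, Pi.mul_apply, hneg]
      ring
    rw [hsplit]
    calc ‖jacobiSum lam (chi2 E) + jacobiSum (lam * chi2 E) (chi2 E)‖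
        ≤ ‖jacobiSum lam (chi2 E)‖ + ‖jacobiSum (lam * chi2 E) (chi2 E)‖ :=
          norm_add_le _ _
      _ ≤ Real.sqrt (Fintype.card E) + Real.sqrt (Fintype.card E) :=
          add_le_add (abs_jacobiSum_le hp lam) (abs_jacobiSum_le hp (lam * chi2 E))
      _ = 2 * Real.sqrt (Fintype.card E) := by ring
  · -- χ odd: the sum is zero
    have hzero : ∑ x : E, χ x * chi2 E (x ^ 2 - 1)
        = χ (-1) * ∑ x : E, χ x * chi2 E (x ^ 2 - 1) := by
      rw [Finset.mul_sum]
      refine Fintype.sum_equiv (Equiv.neg E) _ _ fun x => ?_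
      rw [Equiv.neg_apply]
      have h1 : χ (-x) = χ (-1) * χ x := by rw [← map_mul, neg_one_mul]
      have hneg1 : χ (-1) * χ (-1) = 1 := by rw [← map_mul]; simp
      rw [h1, neg_sq]
      linear_combination -(χ x * chi2 E (x ^ 2 - 1)) * hneg1
    have : (χ (-1) - 1) * ∑ x : E, χ x * chi2 E (x ^ 2 - 1) = 0 := by
      rw [sub_mul, one_mul, ← hzero, sub_self]
    rcases mul_eq_zero.mp this with h | h
    · exact absurd (by linear_combination h) hodd
    · rw [h]
      simp only [norm_zero]
      positivity

lemma chi_val_ne_zero (χ : MulChar E ℂ) (u : Eˣ) : χ (u : E) ≠ 0 := by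
  rw [← MulChar.coe_equivToUnitHom]
  exact Units.ne_zero _

lemma part1 (hp : Odd p) {χ : MulChar E ℂ} (hχ : χ ≠ 1) {b : E} (hb : b ≠ 0) :
    (∑ ξ : Eˣ, χ (ξ : E) * psi p E (b * (ξ : E) ^ 2)) *
      (starRingEnd ℂ) (∑ ξ : Eˣ, χ (ξ : E) * psi p E (b * (ξ : E) ^ 2)) =
    (1 + χ (-1)) * (Fintype.card E : ℂ) +
      chi2 E b * gaussSum (chi2 E) (psi p E) * (∑ x : E, χ x * chi2 E (x ^ 2 - 1)) := by
  have hconj : (starRingEnd ℂ) (∑ ξ : Eˣ, χ (ξ : E) * psi p E (b * (ξ : E) ^ 2))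
      = ∑ η : Eˣ, χ⁻¹ (η : E) * psi p E (-(b * (η : E) ^ 2)) := by
    rw [map_sum]
    refine Finset.sum_congr rfl fun η _ => ?_
    rw [map_mul, psi_conj, ← MulChar.star_apply' χ, starRingEnd_apply]
  rw [hconj, Finset.sum_mul_sum]
  rw [Finset.sum_comm]
  have hstep : ∀ η : Eˣ, ∑ ξ : Eˣ, (χ (ξ : E) * psi p E (b * (ξ : E) ^ 2)) *
        (χ⁻¹ (η : E) * psi p E (-(b * (η : E) ^ 2)))
      = ∑ t : Eˣ, χ (t : E) * psi p E ((b * ((t : E) ^ 2 - 1)) * (η : E) ^ 2) := by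
    intro η
    refine (Fintype.sum_equiv (Equiv.mulLeft η) _ _ fun t => ?_).symm
    rw [Equiv.coe_mulLeft]
    have hval : ((η * t : Eˣ) : E) = (η : E) * (t : E) := Units.val_mul _ _
    have hψ : psi p E (b * ((η : E) * (t : E)) ^ 2) * psi p E (-(b * (η : E) ^ 2))
        = psi p E ((b * ((t : E) ^ 2 - 1)) * (η : E) ^ 2) := by
      rw [← AddChar.map_add_eq_mul]
      congr 1
      ring
    have hinv : χ (η : E) * χ⁻¹ (η : E) = 1 := by
      rw [MulChar.inv_apply' χ, ← map_mul χ, mul_inv_cancel₀ (Units.ne_zero η), map_one]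
    calc χ ((t : E)) * psi p E ((b * ((t : E) ^ 2 - 1)) * (η : E) ^ 2)
        = (χ (η : E) * χ⁻¹ (η : E)) * (χ ((t : E)) *
            psi p E ((b * ((t : E) ^ 2 - 1)) * (η : E) ^ 2)) := by rw [hinv, one_mul]
      _ = (χ (η : E) * χ (t : E) * psi p E (b * ((η : E) * (t : E)) ^ 2)) *
            (χ⁻¹ (η : E) * psi p E (-(b * (η : E) ^ 2))) := by rw [← hψ]; ring
      _ = (χ ((η * t : Eˣ) : E) * psi p E (b * ((η * t : Eˣ) : E) ^ 2)) *
            (χ⁻¹ (η : E) * psi p E (-(b * (η : E) ^ 2))) := by rw [hval, map_mul χ]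
  simp only [hstep]
  rw [Finset.sum_comm]
  have hinner : ∀ t : Eˣ, ∑ η : Eˣ, psi p E ((b * ((t : E) ^ 2 - 1)) * (η : E) ^ 2)
      = chi2 E b * chi2 E ((t : E) ^ 2 - 1) * gaussSum (chi2 E) (psi p E) - 1
        + (if (t : E) ^ 2 = 1 then (Fintype.card E : ℂ) else 0) := by
    intro t
    set c := b * ((t : E) ^ 2 - 1) with hc
    have hsum0 : ∑ η : Eˣ, psi p E (c * (η : E) ^ 2) = (∑ x : E, psi p E (c * x ^ 2)) - 1 := by
      rw [sum_units_eq (fun x => psi p E (c * x ^ 2))]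
      have h0 : psi p E (c * 0 ^ 2) = 1 := by
        rw [show c * (0:E) ^ 2 = 0 by ring, AddChar.map_zero_eq_one]
      rw [h0]
      ring
    by_cases h1 : (t : E) ^ 2 = 1
    · have hc0 : c = 0 := by rw [hc, h1]; ring
      have hchi0 : chi2 E ((t : E) ^ 2 - 1) = 0 := by
        rw [h1, sub_self, MulChar.map_zero]
      rw [if_pos h1, hchi0, hsum0]
      have hone : ∀ x : E, psi p E (c * x ^ 2) = 1 := fun x => by
        rw [hc0, zero_mul, AddChar.map_zero_eq_one]
      simp only [hone, Finset.sum_const, Finset.card_univ, nsmul_eq_mul, mul_one]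
      ring
    · have hcne : c ≠ 0 := mul_ne_zero hb (sub_ne_zero.mpr h1)
      rw [if_neg h1, hsum0, sum_psi_mul_sq hp hcne, hc, map_mul]
      ring
  have hpull : ∀ t : Eˣ, ∑ η : Eˣ, χ (t : E) * psi p E ((b * ((t : E) ^ 2 - 1)) * (η : E) ^ 2)
      = χ (t : E) * (chi2 E b * chi2 E ((t : E) ^ 2 - 1) * gaussSum (chi2 E) (psi p E) - 1
        + (if (t : E) ^ 2 = 1 then (Fintype.card E : ℂ) else 0)) := fun t => by
    rw [← Finset.mul_sum, hinner t]
  simp only [hpull]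
  have hC : ∑ t : Eˣ, χ (t : E) * chi2 E ((t : E) ^ 2 - 1)
      = ∑ x : E, χ x * chi2 E (x ^ 2 - 1) := by
    rw [sum_units_eq (fun x => χ x * chi2 E (x ^ 2 - 1))]
    rw [MulChar.map_zero, zero_mul, zero_add]
  have hzero : ∑ t : Eˣ, χ (t : E) = 0 := by
    have h := sum_units_eq (fun x => χ x)
    rw [MulChar.sum_eq_zero_of_ne_one hχ, MulChar.map_zero] at h
    linear_combination -h
  have hpair : Finset.univ.filter (fun t : Eˣ => (t : E) ^ 2 = 1) = {1, -1} := by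
    ext t
    simp only [Finset.mem_filter, Finset.mem_univ, true_and, Finset.mem_insert,
      Finset.mem_singleton]
    constructor
    · intro h
      rcases mul_self_eq_one_iff.mp (show (t : E) * (t : E) = 1 from by rw [← sq]; exact h)
          with h2 | h2
      · exact Or.inl (Units.val_eq_one.mp h2)
      · refine Or.inr (Units.ext ?_)
        rw [h2]
        simp
    · rintro (rfl | rfl) <;> simp
  have hne : (1 : Eˣ) ≠ -1 := by
    intro h
    have := congrArg (Units.val) h
    rw [Units.val_one, Units.val_neg, Units.val_one] at this
    exact Ring.neg_one_ne_one_of_char_ne_two (ringChar_ne_two p hp) this.symm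
  have hite : ∑ t : Eˣ, χ (t : E) * (if (t : E) ^ 2 = 1 then (Fintype.card E : ℂ) else 0)
      = (1 + χ (-1)) * (Fintype.card E : ℂ) := by
    simp only [show ∀ t : Eˣ, χ (t : E) * (if (t : E) ^ 2 = 1 then (Fintype.card E : ℂ) else 0)
        = (if (t : E) ^ 2 = 1 then χ (t : E) * (Fintype.card E : ℂ) else 0) from
        fun t => by split <;> ring]
    rw [← Finset.sum_filter, hpair, Finset.sum_pair hne]
    simp only [Units.val_one, Units.val_neg, map_one]
    ring
  have hexp : ∀ t : Eˣ, χ (t : E) * (chi2 E b * chi2 E ((t : E) ^ 2 - 1) *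
        gaussSum (chi2 E) (psi p E) - 1 + (if (t : E) ^ 2 = 1 then (Fintype.card E : ℂ) else 0))
      = (chi2 E b * gaussSum (chi2 E) (psi p E)) * (χ (t : E) * chi2 E ((t : E) ^ 2 - 1))
        - χ (t : E) + χ (t : E) * (if (t : E) ^ 2 = 1 then (Fintype.card E : ℂ) else 0) :=
    fun t => by ring
  simp only [hexp]
  rw [Finset.sum_add_distrib, Finset.sum_sub_distrib, ← Finset.mul_sum, hC, hzero, hite]
  ring

end Aux18

/-- Let `q` be an odd prime power and `n ≥ 1` with `(q,n)` even. With `χ`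
a nontrivial multiplicative character of `F_{q^n}` and `b ∈ F_{q^n}^*`, set
`X = Σ_{ξ ∈ F^*} χ(ξ)ψ(bξ²)`, `G = Σ_{ξ ∈ F^*} χ₂(ξ)ψ(ξ)`, and
`C = Σ_{ξ ∈ F} χ(ξ)χ₂(ξ² - 1)`. Then `|X|² = (1 + χ(-1))q^n + χ₂(b)·G·C` and
`|C| ≤ 2q^{n/2}`. -/
theorem abs_sq_X_eq (p a q n : ℕ) [Fact p.Prime] (hp : Odd p) (ha : 0 < a) (hq : q = p ^ a)
    (hn : 1 ≤ n) (hpair : Even ((q ^ n - 1) / 2))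
    (E : Type*) [Field E] [Fintype E] [DecidableEq E] [CharP E p] [Algebra (ZMod p) E]
    (hE : Fintype.card E = q ^ n)
    (χ : MulChar E ℂ) (hχ : χ ≠ 1) (b : E) (hb : b ≠ 0)
    (X G C : ℂ)
    (hX : X = ∑ ξ : Eˣ, χ (ξ : E) * canonAddChar p E (b * (ξ : E) ^ 2))
    (hG : G = ∑ ξ : Eˣ, ((quadraticChar E (ξ : E) : ℤ) : ℂ) * canonAddChar p E (ξ : E))
    (hC : C = ∑ ξ : E, χ ξ * ((quadraticChar E (ξ ^ 2 - 1) : ℤ) : ℂ)) :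
    ((‖X‖ : ℝ) : ℂ) ^ 2 =
        (1 + χ (-1)) * (q : ℂ) ^ n + ((quadraticChar E b : ℤ) : ℂ) * G * C ∧
    ‖C‖ ≤ 2 * Real.sqrt ((q : ℝ) ^ n) := by
  have hqodd : Odd q := hq ▸ hp.pow
  have hqn_odd : Odd (q ^ n) := hqodd.pow
  have hE4 : Fintype.card E % 4 = 1 := by
    have h1 : q ^ n % 2 = 1 := Nat.odd_iff.mp hqn_odd
    have h2 : (q ^ n - 1) / 2 % 2 = 0 := Nat.even_iff.mp hpair
    rw [hE]
    omega
  have hX' : X = ∑ ξ : Eˣ, χ (ξ : E) * Aux18.psi p E (b * (ξ : E) ^ 2) := by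
    rw [hX]
    exact Finset.sum_congr rfl fun ξ _ => by rw [Aux18.psi_apply]
  have hG' : G = gaussSum (Aux18.chi2 E) (Aux18.psi p E) := by
    rw [hG, gaussSum, Aux18.sum_units_eq (fun x => Aux18.chi2 E x * Aux18.psi p E x),
      MulChar.map_zero, zero_mul, zero_add]
    exact Finset.sum_congr rfl fun ξ _ => by rw [Aux18.psi_apply]; rfl
  have hC'' : C = ∑ x : E, χ x * Aux18.chi2 E (x ^ 2 - 1) := hC
  have hcardC : (Fintype.card E : ℂ) = (q : ℂ) ^ n := by rw [hE]; push_cast; ring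
  have hcardR : ((Fintype.card E : ℝ)) = (q : ℝ) ^ n := by rw [hE]; push_cast; ring
  constructor
  · have key := Aux18.part1 hp hχ hb (χ := χ)
    have habs : ((‖X‖ : ℝ) : ℂ) ^ 2 = X * (starRingEnd ℂ) X := by
      rw [← Complex.ofReal_pow, Complex.sq_norm, ← Complex.mul_conj]
    rw [habs, hX', key, hcardC, hG', hC'']
    rfl
  · calc ‖C‖ = ‖∑ x : E, χ x * Aux18.chi2 E (x ^ 2 - 1)‖ := by rw [hC'']
      _ ≤ 2 * Real.sqrt (Fintype.card E) := Aux18.abs_C_le hp hE4 hχ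
      _ = 2 * Real.sqrt ((q : ℝ) ^ n) := by rw [hcardR]
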